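/- Let Θ(K), Θ(E), Θ(F) be the operators on the space of finitely supported sequences ℂ[ℕ] ⊆ ℓ²(ℕ) defined by Θ(K)e_n = q^{-n}e_n, and via Θ(E)K⁻¹·(q^{1/2}(q⁻¹−q)) = X, Θ(K)⁻² = Z (with X, Z the standard Podleś-sphere operators). Then Θ defines a *-representation of U_q(0,+): the operators satisfy Θ(K)Θ(E) = qΘ(E)Θ(K), Θ(K)Θ(F) = q⁻¹Θ(F)Θ(K), [Θ(E),Θ(F)] = −λΘ(K)⁻², and Θ(E)* = Θ(F) on ℂ[ℕ]. -/

import Mathlib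

/-- The `ℓ²`-inner product on the space `ℂ[ℕ]` of finitely supported sequences
(conjugate-linear in the first variable). -/
noncomputable def finsuppInner (f g : ℕ →₀ ℂ) : ℂ :=
  f.sum fun n c => (starRingEnd ℂ) c * g n

lemma fi_zero_left (g : ℕ →₀ ℂ) : finsuppInner 0 g = 0 := Finsupp.sum_zero_index
lemma fi_add_left (f1 f2 g : ℕ →₀ ℂ) :
    finsuppInner (f1 + f2) g = finsuppInner f1 g + finsuppInner f2 g :=
  Finsupp.sum_add_index (by simp) (by intros; simp [add_mul])
lemma fi_single_left (a : ℕ) (b : ℂ) (g : ℕ →₀ ℂ) :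
    finsuppInner (Finsupp.single a b) g = (starRingEnd ℂ) b * g a :=
  Finsupp.sum_single_index (by simp)
lemma fi_zero_right (f : ℕ →₀ ℂ) : finsuppInner f 0 = 0 := by
  simp [finsuppInner]
lemma fi_add_right (f g1 g2 : ℕ →₀ ℂ) :
    finsuppInner f (g1 + g2) = finsuppInner f g1 + finsuppInner f g2 := by
  simp [finsuppInner, mul_add, Finsupp.sum_add]

theorem theta_representation (q : ℝ) (hq0 : 0 < q) (hq1 : q < 1)
    (ΘK ΘKi ΘE ΘF : (ℕ →₀ ℂ) →ₗ[ℂ] (ℕ →₀ ℂ))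
    (hK : ∀ n : ℕ, ΘK (Finsupp.single n 1) = (((q ^ n)⁻¹ : ℝ) : ℂ) • Finsupp.single n 1)
    (hKi : ∀ n : ℕ, ΘKi (Finsupp.single n 1) = ((q ^ n : ℝ) : ℂ) • Finsupp.single n 1)
    (hE0 : ΘE (Finsupp.single 0 1) = 0)
    (hE : ∀ n : ℕ, ΘE (Finsupp.single (n + 1) 1) =
      ((-(q ^ (-(1/2 : ℝ))) * (q - q⁻¹)⁻¹ * Real.sqrt (1 - q ^ (2 * (n + 1))) : ℝ) : ℂ) •
        Finsupp.single n 1)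
    (hF : ∀ n : ℕ, ΘF (Finsupp.single n 1) =
      ((-(q ^ (-(1/2 : ℝ))) * (q - q⁻¹)⁻¹ * Real.sqrt (1 - q ^ (2 * (n + 1))) : ℝ) : ℂ) •
        Finsupp.single (n + 1) 1) :
    ΘK ∘ₗ ΘE = (q : ℂ) • (ΘE ∘ₗ ΘK) ∧
    ΘK ∘ₗ ΘF = ((q : ℂ))⁻¹ • (ΘF ∘ₗ ΘK) ∧
    ΘE ∘ₗ ΘF - ΘF ∘ₗ ΘE = -((((q - q⁻¹)⁻¹ : ℝ) : ℂ) • (ΘKi ∘ₗ ΘKi)) ∧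
    (∀ f g : ℕ →₀ ℂ, finsuppInner (ΘE f) g = finsuppInner f (ΘF g)) := by
  have hqne : q ≠ 0 := hq0.ne'
  have hqC : (q : ℂ) ≠ 0 := by exact_mod_cast hqne
  have h4 : q * q - 1 ≠ 0 := by nlinarith
  have hinv : q - q⁻¹ ≠ 0 := by
    intro h
    rw [sub_eq_zero] at h
    have h1 : q * q = q * q⁻¹ := by rw [← h]
    rw [mul_inv_cancel₀ hqne] at h1
    nlinarith
  set A : ℝ := q ^ (-(1/2 : ℝ)) with hA
  set B : ℝ := (q - q⁻¹)⁻¹ with hB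
  have hhalf : A ^ 2 = q⁻¹ := by
    rw [hA, ← Real.rpow_natCast (q ^ (-(1/2:ℝ))) 2, ← Real.rpow_mul hq0.le]
    norm_num [Real.rpow_neg_one]
  have hrt : ∀ n : ℕ, Real.sqrt (1 - q ^ (2 * (n + 1))) ^ 2 = 1 - q ^ (2 * (n + 1)) := by
    intro n
    refine Real.sq_sqrt ?_
    have := pow_le_one₀ (n := 2 * (n + 1)) hq0.le hq1.le
    linarith
  set c : ℕ → ℝ := fun n => -A * B * Real.sqrt (1 - q ^ (2 * (n + 1))) with hc
  have csq : ∀ n : ℕ, c n * c n = q⁻¹ * (B * B) * (1 - q ^ (2 * (n + 1))) := by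
    intro n
    have h2 := hrt n
    have h1 : c n * c n = A ^ 2 * (B * B) * Real.sqrt (1 - q ^ (2 * (n + 1))) ^ 2 := by
      simp only [hc]; ring
    rw [h1, hhalf, h2]
  -- evaluation of ΘE, ΘF on general singles
  have hEs : ∀ (n : ℕ) (b : ℂ), ΘE (Finsupp.single (n + 1) b) = Finsupp.single n (b * ((c n : ℝ) : ℂ)) := by
    intro n b
    rw [show (Finsupp.single (n+1) b : ℕ →₀ ℂ) = b • Finsupp.single (n+1) 1 from by simp,
      map_smul, hE n]
    rw [smul_smul, Finsupp.smul_single']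
    simp [hc]
  have hE0s : ∀ b : ℂ, ΘE (Finsupp.single 0 b) = 0 := by
    intro b
    rw [show (Finsupp.single 0 b : ℕ →₀ ℂ) = b • Finsupp.single 0 1 from by simp,
      map_smul, hE0, smul_zero]
  have hFs : ∀ (n : ℕ) (b : ℂ), ΘF (Finsupp.single n b) = Finsupp.single (n + 1) (b * ((c n : ℝ) : ℂ)) := by
    intro n b
    rw [show (Finsupp.single n b : ℕ →₀ ℂ) = b • Finsupp.single n 1 from by simp,
      map_smul, hF n]
    rw [smul_smul, Finsupp.smul_single']
    simp [hc]
  refine ⟨?_, ?_, ?_, ?_⟩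
  · -- KE = qEK
    have key : ∀ a : ℕ, ΘK (ΘE (Finsupp.single a 1)) = (q : ℂ) • ΘE (ΘK (Finsupp.single a 1)) := by
      intro a
      match a with
      | 0 => rw [hE0, map_zero, hK 0, map_smul, hE0]; simp
      | n + 1 =>
        rw [hE n, map_smul, hK n, hK (n+1), map_smul, hE n, smul_smul, smul_smul, smul_smul]
        congr 1
        push_cast
        field_simp
        ring
    apply Finsupp.lhom_ext
    intro a b
    have hb : Finsupp.single a b = b • Finsupp.single a 1 := by simp
    rw [hb]
    simp only [LinearMap.comp_apply, map_smul, LinearMap.smul_apply, key a, smul_comm b]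
  · -- KF = q⁻¹ FK
    have key : ∀ a : ℕ, ΘK (ΘF (Finsupp.single a 1)) = (q : ℂ)⁻¹ • ΘF (ΘK (Finsupp.single a 1)) := by
      intro a
      rw [hF a, map_smul, hK (a+1), hK a, map_smul, hF a, smul_smul, smul_smul, smul_smul]
      congr 1
      push_cast
      rw [pow_succ, mul_inv]
      field_simp
    apply Finsupp.lhom_ext
    intro a b
    have hb : Finsupp.single a b = b • Finsupp.single a 1 := by simp
    rw [hb]
    simp only [LinearMap.comp_apply, map_smul, LinearMap.smul_apply, key a, smul_comm b]
  · -- commutator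
    have key : ∀ a : ℕ, ΘE (ΘF (Finsupp.single a 1)) - ΘF (ΘE (Finsupp.single a 1))
        = -((((q - q⁻¹)⁻¹ : ℝ) : ℂ) • ΘKi (ΘKi (Finsupp.single a 1))) := by
      intro a
      have hscal : ∀ a : ℕ, ΘE (ΘF (Finsupp.single a 1)) = ((c a * c a : ℝ) : ℂ) • Finsupp.single a 1 := by
        intro a
        rw [hF a, map_smul, hE a, smul_smul]
        congr 1
        simp only [hc]
        push_cast
        ring
      have hKi2 : ΘKi (ΘKi (Finsupp.single a 1)) = ((q ^ a * q ^ a : ℝ) : ℂ) • Finsupp.single a 1 := by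
        rw [hKi a, map_smul, hKi a, smul_smul]
        congr 1
        push_cast
        ring
      match a with
      | 0 =>
        rw [hscal 0, hE0, map_zero, hKi2, sub_zero, ← neg_smul, smul_smul]
        congr 1
        have hs : c 0 * c 0 = -B * (q ^ 0 * q ^ 0) := by
          rw [csq 0, hB]
          field_simp [h4]
          ring_nf
          have h5 : -1 + q ^ 2 ≠ 0 := by nlinarith
          have h6 : 1 - q ^ 2 * 2 + q ^ 4 = (-1 + q ^ 2) ^ 2 := by ring
          rw [h6]
          field_simp
          ring
        rw [hs]
        push_cast [hB]
        ring
      | n + 1 =>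
        have hFE : ΘF (ΘE (Finsupp.single (n+1) 1)) = ((c n * c n : ℝ) : ℂ) • Finsupp.single (n+1) 1 := by
          rw [hE n, map_smul, hF n, smul_smul]
          congr 1
          simp only [hc]
          push_cast
          ring
        rw [hscal (n+1), hFE, hKi2, ← neg_smul, smul_smul, ← sub_smul]
        congr 1
        have hs : c (n+1) * c (n+1) - c n * c n = -B * (q ^ (n+1) * q ^ (n+1)) := by
          rw [csq n, csq (n+1), hB]
          field_simp [h4]
          ring_nf
          have h5 : -1 + q ^ 2 ≠ 0 := by nlinarith
          have h6 : 1 - q ^ 2 * 2 + q ^ 4 = (-1 + q ^ 2) ^ 2 := by ring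
          rw [h6]
          field_simp
          ring
        rw [← Complex.ofReal_sub, hs]
        push_cast [hB]
        ring
    apply Finsupp.lhom_ext
    intro a b
    have hb : Finsupp.single a b = b • Finsupp.single a 1 := by simp
    rw [hb]
    simp only [LinearMap.sub_apply, LinearMap.comp_apply, map_smul, LinearMap.neg_apply,
      LinearMap.smul_apply, ← smul_sub, key a, smul_comm b, smul_neg]
    rw [hB]
  · -- adjointness
    intro f g
    induction f using Finsupp.induction_linear with
    | zero => rw [map_zero, fi_zero_left, fi_zero_left]
    | add f1 f2 ih1 ih2 => rw [map_add, fi_add_left, fi_add_left, ih1, ih2]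
    | single a b =>
      induction g using Finsupp.induction_linear with
      | zero => rw [map_zero, fi_zero_right, fi_zero_right]
      | add g1 g2 ih1 ih2 => rw [map_add, fi_add_right, fi_add_right, ih1, ih2]
      | single m d =>
        match a with
        | 0 =>
          rw [hE0s b, fi_zero_left, hFs m d, fi_single_left]
          simp [Finsupp.single_apply]
        | n + 1 =>
          rw [hEs n b, hFs m d, fi_single_left, fi_single_left]
          simp only [Finsupp.single_apply, map_mul, Complex.conj_ofReal]
          by_cases hmn : m = n
          · subst hmn
            rw [if_pos rfl, if_pos rfl]
            ring
          · rw [if_neg (by omega), if_neg (by omega)]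
            simp
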